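/- Let K be a field of characteristic zero and let C = x + C_{-1}x^{-1} + C_{-2}x^{-2} + ⋯ ∈ K[y]((x^{-1})) with C_{-k} ∈ K[y]. If deg_y(C_{-k}) ≤ k+1 for k = 1, 2, …, m+n−2 and all coefficients (C^n)_{-k} for k = 1, …, m−1 as well as the recursively determined coefficients C_{-k} for k > m+n−2 are defined by the vanishing of (C^n)_{-k} for all k ≥ 1, then deg_y(C_{-k}) ≤ k+1 for all k ≥ 1. -/

import Mathlib

open Polynomial HahnSeries Finset

noncomputable section

section aux
variable {K : Type*} [Field K]

def degZ (p : Polynomial K) : WithBot ℤ := p.degree.map (fun n : ℕ => (n : ℤ))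

lemma degZ_zero : degZ (0 : Polynomial K) = ⊥ := by simp [degZ]

lemma degZ_one : degZ (1 : Polynomial K) ≤ 0 := by simp [degZ]

lemma degZ_mul (p q : Polynomial K) : degZ (p * q) = degZ p + degZ q := by
  unfold degZ
  rw [Polynomial.degree_mul]
  rcases hp : p.degree with _ | a <;> rcases hq : q.degree with _ | b <;>
    simp [WithBot.none_eq_bot, WithBot.some_eq_coe, ← WithBot.coe_add]

lemma degZ_mul_le {p q : Polynomial K} {a b : WithBot ℤ}
    (hp : degZ p ≤ a) (hq : degZ q ≤ b) : degZ (p * q) ≤ a + b := by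
  rw [degZ_mul]; exact add_le_add hp hq

lemma degZ_add_le {p q : Polynomial K} {c : WithBot ℤ}
    (hp : degZ p ≤ c) (hq : degZ q ≤ c) : degZ (p + q) ≤ c := by
  have h := Polynomial.degree_add_le p q
  unfold degZ at *
  rcases h' : (p+q).degree with _ | d
  · simp [WithBot.none_eq_bot]
  · rw [h'] at h
    rcases le_max_iff.1 h with h1 | h1
    · rcases hpd : p.degree with _ | e
      · rw [hpd] at h1; simp [WithBot.none_eq_bot, WithBot.some_eq_coe] at h1
      · rw [hpd] at h1 hp
        refine le_trans ?_ hp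
        simp only [WithBot.some_eq_coe, WithBot.map_coe, WithBot.coe_le_coe] at *
        exact_mod_cast h1
    · rcases hqd : q.degree with _ | e
      · rw [hqd] at h1; simp [WithBot.none_eq_bot, WithBot.some_eq_coe] at h1
      · rw [hqd] at h1 hq
        refine le_trans ?_ hq
        simp only [WithBot.some_eq_coe, WithBot.map_coe, WithBot.coe_le_coe] at *
        exact_mod_cast h1

lemma degZ_sum_le {α : Type*} {s : Finset α} {f : α → Polynomial K} {c : WithBot ℤ}
    (h : ∀ x ∈ s, degZ (f x) ≤ c) : degZ (∑ x ∈ s, f x) ≤ c := by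
  classical
  induction s using Finset.induction_on with
  | empty => simp [degZ_zero]
  | insert _ _ hx ih =>
    rw [Finset.sum_insert hx]
    exact degZ_add_le (h _ (Finset.mem_insert_self _ _))
      (ih fun x hxs => h x (Finset.mem_insert_of_mem hxs))

lemma degZ_le_iff {p : Polynomial K} {r : ℕ} :
    degZ p ≤ ((r : ℤ) : WithBot ℤ) ↔ p.degree ≤ (r : WithBot ℕ) := by
  unfold degZ
  rcases hp : p.degree with _ | d
  · simp [WithBot.none_eq_bot]
  · simp only [WithBot.some_eq_coe, WithBot.map_coe, WithBot.coe_le_coe, Nat.cast_le]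
    exact Nat.cast_le.symm

lemma hahn_vanish_mul {R : Type*} [CommRing R] {X Y : HahnSeries ℤ R} {a b : ℤ}
    (hX : ∀ i < a, X.coeff i = 0) (hY : ∀ i < b, Y.coeff i = 0) :
    (∀ i < a + b, (X * Y).coeff i = 0) ∧ (X * Y).coeff (a + b) = X.coeff a * Y.coeff b := by
  have hmemX : ∀ i ∈ X.support, a ≤ i := by
    intro i hi; by_contra h; exact hi (hX i (by omega))
  have hmemY : ∀ i ∈ Y.support, b ≤ i := by
    intro i hi; by_contra h; exact hi (hY i (by omega))
  constructor
  · intro i hi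
    rw [HahnSeries.coeff_mul]
    apply Finset.sum_eq_zero
    intro p hp
    rw [Finset.mem_addAntidiagonal] at hp
    have h1 := hmemX _ hp.1
    have h2 := hmemY _ hp.2.1
    have := hp.2.2
    omega
  · rw [HahnSeries.coeff_mul]
    rw [Finset.sum_eq_single (a, b)]
    · intro p hp hne
      rw [Finset.mem_addAntidiagonal] at hp
      have h1 := hmemX _ hp.1
      have h2 := hmemY _ hp.2.1
      have h3 := hp.2.2
      exfalso
      apply hne
      have : p.1 = a ∧ p.2 = b := by omega
      exact Prod.ext this.1 this.2
    · intro h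
      rw [Finset.mem_addAntidiagonal] at h
      simp only [HahnSeries.mem_support, not_and, not_not] at h
      by_cases h1 : X.coeff a = 0
      · rw [h1, zero_mul]
      · by_cases h2 : Y.coeff b = 0
        · rw [h2, mul_zero]
        · exact absurd trivial (h h1 h2)

lemma pow_lead {R : Type*} [CommRing R] {X : HahnSeries ℤ R}
    (h1 : X.coeff (-1) = 1) (h2 : ∀ i < (-1 : ℤ), X.coeff i = 0) (j : ℕ) :
    (∀ i : ℤ, i < -(j : ℤ) → (X ^ j).coeff i = 0) ∧ (X ^ j).coeff (-(j : ℤ)) = 1 := by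
  induction j with
  | zero =>
    constructor
    · intro i hi
      rw [pow_zero, HahnSeries.coeff_one, if_neg (by omega)]
    · rw [pow_zero]
      simp
  | succ j ihj =>
    have key := hahn_vanish_mul (X := X) (Y := X ^ j) (a := -1) (b := -(j : ℤ)) h2 ihj.1
    have heq : X ^ (j + 1) = X * X ^ j := by ring
    constructor
    · intro i hi
      rw [heq]
      apply key.1
      omega
    · rw [heq, show -((j + 1 : ℕ) : ℤ) = (-1 : ℤ) + -(j : ℤ) by push_cast; ring,
        key.2, h1, ihj.2, one_mul]

lemma hahn_degZ_mul {X Y : HahnSeries ℤ (Polynomial K)} {a b : ℤ}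
    (hX : ∀ i : ℤ, degZ (X.coeff i) ≤ ((i + a : ℤ) : WithBot ℤ))
    (hY : ∀ i : ℤ, degZ (Y.coeff i) ≤ ((i + b : ℤ) : WithBot ℤ)) :
    ∀ i : ℤ, degZ ((X * Y).coeff i) ≤ ((i + a + b : ℤ) : WithBot ℤ) := by
  intro i
  rw [HahnSeries.coeff_mul]
  apply degZ_sum_le
  intro p hp
  rw [Finset.mem_addAntidiagonal] at hp
  refine (degZ_mul_le (hX p.1) (hY p.2)).trans ?_
  rw [← WithBot.coe_add, WithBot.coe_le_coe]
  have := hp.2.2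
  omega

end aux

/-- Let `C = x + C₋₁x⁻¹ + C₋₂x⁻² + ⋯ ∈ K[y]((x⁻¹))` with
`C₋ₖ ∈ K[y]`, satisfying `(C^n)_{-k} = 0` for all `k ≥ 1` (which recursively
determines `C₋ₖ` for `k > m+n−2`).  If `deg_y C₋ₖ ≤ k+1` for
`k = 1, …, m+n−2`, then `deg_y C₋ₖ ≤ k+1` for all `k ≥ 1`.
Here `C₋ₖ = C.coeff k` in the `t = x⁻¹` Hahn-series picture. -/
theorem statement13 (K : Type*) [Field K] [CharZero K] (n m : ℕ)
    (hn : 1 ≤ n) (hm : 1 ≤ m)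
    (C : LaurentSeries (Polynomial K))
    (hC1 : C.coeff (-1) = 1) (hC0 : C.coeff 0 = 0)
    (hC2 : ∀ j : ℤ, j < -1 → C.coeff j = 0)
    (hvan : ∀ k : ℤ, 1 ≤ k → (C ^ n).coeff k = 0)
    (hdeg : ∀ k : ℕ, 1 ≤ k → k ≤ m + n - 2 → (C.coeff (k : ℤ)).degree ≤ ((k + 1 : ℕ) : WithBot ℕ)) :
    ∀ k : ℕ, 1 ≤ k → (C.coeff (k : ℤ)).degree ≤ ((k + 1 : ℕ) : WithBot ℕ) := by
  intro k
  induction k using Nat.strong_induction_on with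
  | _ k ih =>
  intro hk1
  by_cases hsmall : k ≤ m + n - 2
  · exact hdeg k hk1 hsmall
  · have hkbig : m + n - 1 ≤ k := by omega
    by_cases hck : C.coeff (k : ℤ) = 0
    · rw [hck, Polynomial.degree_zero]
      exact bot_le
    -- define truncation
    set E : LaurentSeries (Polynomial K) :=
      ⟨fun i => if (k : ℤ) ≤ i then C.coeff i else 0,
        C.isPWO_support'.mono (by
          intro i hi
          simp only [Function.mem_support, ne_eq] at hi ⊢
          intro h
          apply hi
          rw [h]
          split <;> rfl
          )⟩ with hEdef
    have hE : ∀ i : ℤ, E.coeff i = if (k : ℤ) ≤ i then C.coeff i else 0 := fun i => rfl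
    set T : LaurentSeries (Polynomial K) := C - E with hTdef
    have hT : ∀ i : ℤ, T.coeff i = if (k : ℤ) ≤ i then 0 else C.coeff i := by
      intro i
      rw [hTdef, HahnSeries.coeff_sub, hE]
      split <;> simp
    -- coefficient-wise degree bound for T
    have hTdeg : ∀ i : ℤ, degZ (T.coeff i) ≤ ((i + 1 : ℤ) : WithBot ℤ) := by
      intro i
      rw [hT]
      by_cases hik : (k : ℤ) ≤ i
      · rw [if_pos hik, degZ_zero]; exact bot_le
      · rw [if_neg hik]
        rcases lt_trichotomy i 0 with h | h | h
        · rcases lt_trichotomy i (-1) with h' | h' | h'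
          · rw [hC2 i h', degZ_zero]; exact bot_le
          · rw [h', hC1]
            exact le_trans degZ_one (by norm_num)
          · omega
        · rw [h, hC0, degZ_zero]; exact bot_le
        · have h1 : 1 ≤ i := by omega
          set r : ℕ := i.toNat with hr
          have hir : (i : ℤ) = (r : ℤ) := by omega
          have hrk : r < k := by omega
          have hr1 : 1 ≤ r := by omega
          have := (degZ_le_iff (p := C.coeff (r : ℤ)) (r := r + 1)).2 (ih r hrk hr1)
          rw [hir]
          convert this using 2
          omega
    have hT1 : T.coeff (-1) = 1 := by rw [hT, if_neg (by omega), hC1]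
    have hT2 : ∀ i < (-1 : ℤ), T.coeff i = 0 := by
      intro i hi
      rw [hT]
      split
      · rfl
      · exact hC2 i hi
    -- degree bound for powers of T
    have hTpowdeg : ∀ j : ℕ, ∀ i : ℤ, degZ ((T ^ j).coeff i) ≤ ((i + j : ℤ) : WithBot ℤ) := by
      intro j
      induction j with
      | zero =>
        intro i
        rw [pow_zero, HahnSeries.coeff_one]
        split
        · subst ‹i = 0›
          exact le_trans degZ_one (by norm_num)
        · rw [degZ_zero]; exact bot_le
      | succ j ihj =>
        intro i
        rw [pow_succ]
        have := hahn_degZ_mul (X := T ^ j) (Y := T) (a := (j : ℤ)) (b := 1) ihj hTdeg i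
        refine this.trans ?_
        rw [WithBot.coe_le_coe]
        push_cast
        omega
    -- leading coefficients of powers
    have hCpow := fun j => pow_lead hC1 hC2 j
    have hTpow := fun j => pow_lead hT1 hT2 j
    -- the geometric sum
    set S : LaurentSeries (Polynomial K) :=
      ∑ i ∈ Finset.range n, C ^ i * T ^ (n - 1 - i) with hSdef
    have hcoeffsum : ∀ t : ℤ, S.coeff t = ∑ i ∈ Finset.range n, (C ^ i * T ^ (n - 1 - i)).coeff t := by
      intro t
      rw [hSdef]
      exact map_sum (HahnSeries.coeff.addMonoidHom t) _ _
    have hsubcast : ∀ i ∈ Finset.range n, (((n - 1 - i : ℕ) : ℤ)) = (n : ℤ) - 1 - i := by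
      intro i hi
      rw [Finset.mem_range] at hi
      omega
    have hS2 : ∀ t < (1 : ℤ) - n, S.coeff t = 0 := by
      intro t ht
      rw [hcoeffsum]
      apply Finset.sum_eq_zero
      intro i hi
      have h := (hahn_vanish_mul (hCpow i).1 (hTpow (n - 1 - i)).1).1
      apply h
      rw [hsubcast i hi]
      omega
    have hS1 : S.coeff ((1 : ℤ) - n) = (n : Polynomial K) := by
      rw [hcoeffsum]
      have : ∀ i ∈ Finset.range n, (C ^ i * T ^ (n - 1 - i)).coeff ((1 : ℤ) - n) = 1 := by
        intro i hi
        have h := (hahn_vanish_mul (hCpow i).1 (hTpow (n - 1 - i)).1).2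
        rw [show (1 : ℤ) - n = -(i : ℤ) + -(((n - 1 - i : ℕ)) : ℤ) by rw [hsubcast i hi]; ring,
          h, (hCpow i).2, (hTpow (n - 1 - i)).2, one_mul]
      rw [Finset.sum_congr rfl this, Finset.sum_const, Finset.card_range, nsmul_eq_mul, mul_one]
    -- geometric identity
    have hgeom : S * E = C ^ n - T ^ n := by
      have := geom_sum₂_mul C T n
      rw [hSdef]
      rw [show C - T = E by rw [hTdef]; ring] at this
      exact this
    have hEvan : ∀ i < (k : ℤ), E.coeff i = 0 := by
      intro i hi
      rw [hE, if_neg (by omega)]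
    -- extract the key coefficient
    have hkey := (hahn_vanish_mul hS2 hEvan).2
    rw [hgeom, hS1, hE, if_pos le_rfl] at hkey
    have hs1 : (1 : ℤ) ≤ 1 - n + k := by
      have h1 : ((m + n - 1 : ℕ) : ℤ) ≤ (k : ℤ) := by exact_mod_cast hkbig
      have h2 : ((m + n - 1 : ℕ) : ℤ) = (m : ℤ) + n - 1 := by omega
      have h3 : (1 : ℤ) ≤ (m : ℤ) := by exact_mod_cast hm
      omega
    rw [HahnSeries.coeff_sub, hvan _ hs1, zero_sub] at hkey
    -- hkey : -(T^n).coeff (1 - n + k) = n * C.coeff k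
    have hdegT : degZ ((T ^ n).coeff ((1 : ℤ) - n + k)) ≤ (((1 : ℤ) - n + k + n : ℤ) : WithBot ℤ) :=
      hTpowdeg n _
    have hdegC : degZ ((n : Polynomial K) * C.coeff (k : ℤ)) ≤ (((k : ℤ) + 1 : ℤ) : WithBot ℤ) := by
      rw [← hkey]
      have : degZ (-(T ^ n).coeff ((1 : ℤ) - n + k)) = degZ ((T ^ n).coeff ((1 : ℤ) - n + k)) := by
        unfold degZ
        rw [Polynomial.degree_neg]
      rw [this]
      refine hdegT.trans ?_
      rw [WithBot.coe_le_coe]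
      omega
    have hnK : (n : K) ≠ 0 := Nat.cast_ne_zero.2 (by omega)
    have hdegn : degZ ((n : Polynomial K)) = 0 := by
      rw [show ((n : Polynomial K)) = Polynomial.C ((n : K)) by simp]
      unfold degZ
      rw [Polynomial.degree_C hnK]
      rfl
    have hfin : degZ (C.coeff (k : ℤ)) ≤ (((k : ℤ) + 1 : ℤ) : WithBot ℤ) := by
      have h' := hdegC
      rw [degZ_mul, hdegn, zero_add] at h'
      exact h'
    apply (degZ_le_iff (p := C.coeff (k : ℤ)) (r := k + 1)).1
    rw [show (((k + 1 : ℕ) : ℤ)) = (k : ℤ) + 1 by push_cast; ring]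
    exact hfin


end
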